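/- Suppose (S_k^{(G)})_{k=2}^{K+1} are sequences of positive random variables indexed by G with the property that for each k ≥ r+2, S_{k+1}^{(G)}/(L·S_k^{(G)}) → 1 in probability as G → ∞, while for k = r+1, S_{k+1}^{(G)}/S_k^{(G)} → 0 in probability, and for k ≤ r, S_{k+1}^{(G)}/S_k^{(G)} is bounded below in probability by some constant > L/2 > 0. Then the estimator r̂ = argmin_{2≤k≤K} S_{k+1}^{(G)}/S_k^{(G)} - 1 converges in probability to r. -/

import Mathlib

open MeasureTheory Filter

/-- Consistency of the Markov order estimator r̂ = argmin_{2≤k≤K} S_{k+1}/S_k - 1: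
under the stated in-probability behaviour of the ratios, the probability that the
ratio at k = r+1 is the unique minimum over 2 ≤ k ≤ K tends to one, i.e. r̂ → r
in probability. -/
theorem order_estimator_consistent {Ω : Type*} [MeasurableSpace Ω]
    (μ : ℕ → Measure Ω) (hprob : ∀ G, IsProbabilityMeasure (μ G))
    (S : ℕ → ℕ → Ω → ℝ) (hmeas : ∀ G k, Measurable (S G k))
    (hpos : ∀ G k ω, 0 < S G k ω)
    (L : ℝ) (hL : 2 ≤ L) (K r : ℕ) (hr : 1 ≤ r) (hrK : r + 2 ≤ K)
    (htail : ∀ k, r + 2 ≤ k → k ≤ K → ∀ δ > (0 : ℝ),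
      Tendsto (fun G => μ G {ω | δ < |S G (k + 1) ω / (L * S G k ω) - 1|})
        atTop (nhds 0))
    (hdrop : ∀ δ > (0 : ℝ),
      Tendsto (fun G => μ G {ω | δ < S G (r + 2) ω / S G (r + 1) ω})
        atTop (nhds 0))
    (hlow : ∀ k, 2 ≤ k → k ≤ r → ∃ c : ℝ, L / 2 < c ∧
      Tendsto (fun G => μ G {ω | S G (k + 1) ω / S G k ω < c}) atTop (nhds 0)) :
    Tendsto (fun G => μ G {ω | ∀ k, 2 ≤ k → k ≤ K → k ≠ r + 1 →
        S G (r + 2) ω / S G (r + 1) ω < S G (k + 1) ω / S G k ω})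
      atTop (nhds 1) := by
  classical
  have hc : ∀ k, 2 ≤ k → k ≤ r → ∃ c : ℝ, 1 < c ∧
      Tendsto (fun G => μ G {ω | S G (k + 1) ω / S G k ω < c}) atTop (nhds 0) := by
    intro k h2 hk
    obtain ⟨c, hc1, hc2⟩ := hlow k h2 hk
    exact ⟨c, by linarith, hc2⟩
  set c : ℕ → ℝ := fun k => if h : 2 ≤ k ∧ k ≤ r then (hc k h.1 h.2).choose else 2 with hcdef
  have hc1 : ∀ k, 2 ≤ k → k ≤ r → 1 < c k := by
    intro k h2 hk
    simp only [hcdef, dif_pos (And.intro h2 hk)]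
    exact (hc k h2 hk).choose_spec.1
  have hc2 : ∀ k, 2 ≤ k → k ≤ r →
      Tendsto (fun G => μ G {ω | S G (k + 1) ω / S G k ω < c k}) atTop (nhds 0) := by
    intro k h2 hk
    simp only [hcdef, dif_pos (And.intro h2 hk)]
    exact (hc k h2 hk).choose_spec.2
  set E : ℕ → ℕ → Set Ω := fun k G =>
    if k = r + 1 then {ω | (1:ℝ)/2 ≤ S G (r+2) ω / S G (r+1) ω}
    else if k ≤ r then {ω | S G (k+1) ω / S G k ω < c k}
    else {ω | (1:ℝ)/4 < |S G (k+1) ω / (L * S G k ω) - 1|} with hEdef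
  have htend : ∀ k ∈ Finset.Icc 2 K, Tendsto (fun G => μ G (E k G)) atTop (nhds 0) := by
    intro k hk
    rw [Finset.mem_Icc] at hk
    by_cases hk1 : k = r + 1
    · simp only [hEdef, if_pos hk1]
      refine tendsto_of_tendsto_of_tendsto_of_le_of_le tendsto_const_nhds
        (hdrop (1/4) (by norm_num)) (fun G => zero_le) (fun G => measure_mono ?_)
      intro ω hω
      simp only [Set.mem_setOf_eq] at hω ⊢
      linarith
    · by_cases hk2 : k ≤ r
      · simp only [hEdef, if_neg hk1, if_pos hk2]
        exact hc2 k hk.1 hk2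
      · simp only [hEdef, if_neg hk1, if_neg hk2]
        have hk3 : r + 2 ≤ k := by omega
        exact htail k hk3 hk.2 (1/4) (by norm_num)
  have hsum : Tendsto (fun G => ∑ k ∈ Finset.Icc 2 K, μ G (E k G)) atTop (nhds 0) := by
    have := tendsto_finset_sum (Finset.Icc 2 K) htend
    simpa using this
  have hone : Tendsto (fun G => (1 : ENNReal) - ∑ k ∈ Finset.Icc 2 K, μ G (E k G))
      atTop (nhds 1) := by
    have := ENNReal.Tendsto.sub (tendsto_const_nhds (x := (1:ENNReal))) hsum
      (Or.inl ENNReal.one_ne_top)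
    simpa using this
  refine tendsto_of_tendsto_of_tendsto_of_le_of_le hone tendsto_const_nhds ?_ ?_
  · -- lower bound
    intro G
    set good : Set Ω := {ω | ∀ k, 2 ≤ k → k ≤ K → k ≠ r + 1 →
        S G (r + 2) ω / S G (r + 1) ω < S G (k + 1) ω / S G k ω} with hgood
    have hincl : goodᶜ ⊆ ⋃ k ∈ Finset.Icc 2 K, E k G := by
      intro ω hω
      by_contra hnot
      have hnot' : ∀ j ∈ Finset.Icc 2 K, ¬ ω ∈ E j G :=
        fun j hj hEj => hnot (Set.mem_biUnion hj hEj)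
      apply hω
      intro k h2 hK hne
      have hr1 : ¬ ω ∈ E (r+1) G :=
        hnot' (r+1) (Finset.mem_Icc.mpr ⟨by omega, by omega⟩)
      have hratio : S G (r + 2) ω / S G (r + 1) ω < 1/2 := by
        simp only [hEdef, if_pos rfl, Set.mem_setOf_eq, not_le] at hr1
        exact hr1
      have hkE : ¬ ω ∈ E k G := hnot' k (Finset.mem_Icc.mpr ⟨h2, hK⟩)
      by_cases hk2 : k ≤ r
      · simp only [hEdef, if_neg hne, if_pos hk2, Set.mem_setOf_eq, not_lt] at hkE
        have := hc1 k h2 hk2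
        linarith
      · have hk3 : r + 2 ≤ k := by omega
        have hne2 : k ≠ r + 1 := hne
        simp only [hEdef, if_neg hne, if_neg hk2, Set.mem_setOf_eq, not_lt] at hkE
        have habs : |S G (k+1) ω / (L * S G k ω) - 1| ≤ 1/4 := hkE
        have hx : (3:ℝ)/4 ≤ S G (k+1) ω / (L * S G k ω) := by
          have := abs_le.mp habs
          linarith [this.1]
        have hLpos : (0:ℝ) < L := by linarith
        have hSpos := hpos G k ω
        have heq : S G (k+1) ω / S G k ω = L * (S G (k+1) ω / (L * S G k ω)) := by
          field_simp
        have : (3:ℝ)/2 ≤ S G (k+1) ω / S G k ω := by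
          rw [heq]
          calc (3:ℝ)/2 = 2 * (3/4) := by norm_num
          _ ≤ L * (S G (k+1) ω / (L * S G k ω)) := by
              apply mul_le_mul hL hx (by norm_num) (by linarith)
        linarith
    have h1 : (1 : ENNReal) ≤ μ G good + μ G goodᶜ := by
      haveI := hprob G
      have h := measure_union_le (μ := μ G) good goodᶜ
      rw [Set.union_compl_self, measure_univ] at h
      exact h
    have h2 : μ G goodᶜ ≤ ∑ k ∈ Finset.Icc 2 K, μ G (E k G) :=
      le_trans (measure_mono hincl) (measure_biUnion_finset_le _ _)
    calc (1 : ENNReal) - ∑ k ∈ Finset.Icc 2 K, μ G (E k G)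
        ≤ 1 - μ G goodᶜ := tsub_le_tsub_left h2 1
      _ ≤ μ G good := by
          rw [tsub_le_iff_right]
          exact le_trans h1 (by rw [add_comm])
  · intro G
    haveI := hprob G
    exact prob_le_one
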